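/- For the 3⊗3 states ρ^(α) with support projection P_α = Σ_{m=0}^{2} U^m |ψ₀⟩⟨ψ₀| (U†)^m where U = X† ⊗ X, X = Σ_j |j⊕1⟩⟨j| (indices mod 3), and |ψ₀⟩ = √α|00⟩ + √(1-α)|11⟩ with 0 < α ≤ 1/5: the partial transpose P_α^{T_B} has operator norm ‖P_α^{T_B}‖_∞ = 1 - α, attained at the product eigenvector |11⟩. -/

import Mathlib

open scoped Matrix ComplexOrder

/-- Partial transpose on the second tensor factor. -/
def pt {α β : Type*} (M : Matrix (α × β) (α × β) ℂ) : Matrix (α × β) (α × β) ℂ :=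
  fun p q => M (p.1, q.2) (q.1, p.2)

open scoped Classical in
/-- Trace norm of a Hermitian matrix: sum of absolute values of eigenvalues
(and `0` on non-Hermitian matrices). -/
noncomputable def traceNorm {n : Type*} [Fintype n] [DecidableEq n]
    (M : Matrix n n ℂ) : ℝ :=
  if h : M.IsHermitian then ∑ i, |h.eigenvalues i| else 0

open scoped Classical in
/-- Operator norm of a Hermitian matrix: maximum absolute value of eigenvalues
(and `0` on non-Hermitian matrices). -/
noncomputable def opNorm {n : Type*} [Fintype n] [DecidableEq n]
    (M : Matrix n n ℂ) : ℝ :=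
  if h : M.IsHermitian then ⨆ i, |h.eigenvalues i| else 0

/-- The cyclic shift `X = ∑_j |j⊕1⟩⟨j|` on `ℂ³`. -/
def shiftX : Matrix (Fin 3) (Fin 3) ℂ := fun i j => if i = j + 1 then 1 else 0

/-- `U = X† ⊗ X` on `ℂ³ ⊗ ℂ³`. -/
def Umat : Matrix (Fin 3 × Fin 3) (Fin 3 × Fin 3) ℂ :=
  fun p q => shiftXᴴ p.1 q.1 * shiftX p.2 q.2

/-- `|ψ₀⟩ = √α |00⟩ + √(1-α) |11⟩`. -/
noncomputable def psi0 (α : ℝ) : (Fin 3 × Fin 3) → ℂ :=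
  fun p => if p = (0, 0) then ((Real.sqrt α : ℝ) : ℂ)
    else if p = (1, 1) then ((Real.sqrt (1 - α) : ℝ) : ℂ) else 0

/-- The support projection `P_α = ∑_{m=0}^{2} U^m |ψ₀⟩⟨ψ₀| (U†)^m`
of the state `ρ^(α)`. -/
noncomputable def Palpha (α : ℝ) : Matrix (Fin 3 × Fin 3) (Fin 3 × Fin 3) ℂ :=
  ∑ m ∈ Finset.range 3,
    Umat ^ m * Matrix.vecMulVec (psi0 α) (star (psi0 α)) * (Umat ^ m)ᴴ

/-- The basis vector `|11⟩` of `ℂ³ ⊗ ℂ³`. -/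
def e11 : (Fin 3 × Fin 3) → ℂ := fun p => if p = (1, 1) then 1 else 0

/-! ### Auxiliary material -/

section Aux

variable {n : Type*} [Fintype n]

lemma mul_vecMulVec' (A : Matrix n n ℂ) (u v : n → ℂ) :
    A * Matrix.vecMulVec u v = Matrix.vecMulVec (A *ᵥ u) v := by
  ext i j
  simp [Matrix.mul_apply, Matrix.vecMulVec_apply, Matrix.mulVec, dotProduct,
    Finset.sum_mul, mul_assoc]

lemma vecMulVec_mul' (u v : n → ℂ) (A : Matrix n n ℂ) :
    Matrix.vecMulVec u v * A = Matrix.vecMulVec u (v ᵥ* A) := by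
  ext i j
  simp [Matrix.mul_apply, Matrix.vecMulVec_apply, Matrix.vecMul, dotProduct,
    Finset.mul_sum, mul_assoc]

lemma posSemidef_smul_vecMulVec (r : ℝ) (hr : 0 ≤ r) (x : n → ℂ) :
    ((r : ℂ) • Matrix.vecMulVec x (star x)).PosSemidef := by
  refine Matrix.posSemidef_iff_dotProduct_mulVec.mpr ⟨?_, ?_⟩
  · ext i j
    simp [Matrix.conjTranspose_apply, Matrix.vecMulVec_apply, mul_comm]
  · intro y
    have : dotProduct (star y) (((r : ℂ) • Matrix.vecMulVec x (star x)) *ᵥ y)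
        = (r : ℂ) * (star (dotProduct (star x) y) * dotProduct (star x) y) := by
      simp only [Matrix.smul_mulVec, dotProduct_smul, smul_eq_mul]
      congr 1
      simp [Matrix.mulVec, Matrix.vecMulVec_apply, dotProduct, Finset.mul_sum,
        Finset.sum_mul, Finset.mul_sum]
      rw [Finset.sum_comm]
      congr 1; ext i; congr 1; ext j; ring
    rw [this]
    have h1 : (0:ℂ) ≤ star (dotProduct (star x) y) * dotProduct (star x) y :=
      star_mul_self_nonneg _
    have h2 : (0:ℂ) ≤ (r:ℂ) := by exact_mod_cast Complex.zero_le_real.mpr hr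
    exact mul_nonneg h2 h1

lemma posSemidef_smul_three (r : ℝ) (hr : 0 ≤ r) (x y z : n → ℂ) :
    ((r : ℂ) • (Matrix.vecMulVec x (star x) + Matrix.vecMulVec y (star y)
      + Matrix.vecMulVec z (star z))).PosSemidef := by
  rw [smul_add, smul_add]
  exact ((posSemidef_smul_vecMulVec r hr x).add (posSemidef_smul_vecMulVec r hr y)).add
    (posSemidef_smul_vecMulVec r hr z)

variable [DecidableEq n]

lemma exists_eigenvalue_eq' {M : Matrix n n ℂ} (hM : M.IsHermitian) {c : ℝ} {v : n → ℂ}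
    (hv : v ≠ 0) (h : M *ᵥ v = (c : ℂ) • v) : ∃ i, hM.eigenvalues i = c := by
  have hdet : (M - (c : ℂ) • 1).det = 0 := by
    rw [← Matrix.exists_mulVec_eq_zero_iff]
    exact ⟨v, hv, by simp [Matrix.sub_mulVec, h, Matrix.smul_mulVec]⟩
  set U := (hM.eigenvectorUnitary : Matrix n n ℂ) with hUdef
  have hU1 : U * star U = 1 := Unitary.mul_star_self_of_mem hM.eigenvectorUnitary.2
  have hrw : M - (c : ℂ) • 1
      = U * (Matrix.diagonal (RCLike.ofReal ∘ hM.eigenvalues) - (c : ℂ) • 1) * star U := by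
    conv_lhs => rw [hM.spectral_theorem, Unitary.conjStarAlgAut_apply]
    rw [Matrix.mul_sub, Matrix.sub_mul]
    congr 1
    rw [Matrix.mul_smul, Matrix.mul_one, Matrix.smul_mul, hU1]
  rw [hrw, Matrix.det_mul, Matrix.det_mul] at hdet
  have hdetU : Matrix.det U * Matrix.det (star U) = 1 := by
    rw [← Matrix.det_mul, hU1, Matrix.det_one]
  set D : Matrix n n ℂ := Matrix.diagonal (RCLike.ofReal ∘ hM.eigenvalues) - (c : ℂ) • 1 with hD
  have hd : D.det = 0 := by
    have : Matrix.det U * Matrix.det D * Matrix.det (star U)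
        = Matrix.det D * (Matrix.det U * Matrix.det (star U)) := by ring
    rw [this, hdetU, mul_one] at hdet
    exact hdet
  rw [hD, Matrix.smul_one_eq_diagonal, Matrix.diagonal_sub, Matrix.det_diagonal] at hd
  obtain ⟨i, _, hi⟩ := Finset.prod_eq_zero_iff.mp hd
  refine ⟨i, ?_⟩
  have : (hM.eigenvalues i : ℂ) = (c : ℂ) := by
    have := sub_eq_zero.mp hi
    simpa using this
  exact_mod_cast this

lemma eigenvector_dot_self {M : Matrix n n ℂ} (hM : M.IsHermitian) (i : n) :
    dotProduct (star ⇑(hM.eigenvectorBasis i)) ⇑(hM.eigenvectorBasis i) = 1 := by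
  have hnorm : ‖hM.eigenvectorBasis i‖ = 1 := hM.eigenvectorBasis.orthonormal.1 i
  have := (inner_self_eq_norm_sq_to_K (𝕜 := ℂ) (hM.eigenvectorBasis i))
  rw [EuclideanSpace.inner_eq_star_dotProduct, hnorm] at this
  simpa [dotProduct_comm] using this

end Aux

/-- The two-entry vector `a e_{ij} + b e_{kl}`. -/
noncomputable def wvec (a b : ℝ) (i j k l : Fin 3) : (Fin 3 × Fin 3) → ℂ :=
  fun p => if p = (i, j) then (a : ℂ) else if p = (k, l) then (b : ℂ) else 0

/-- The standard basis vector `e_{ij}`. -/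
def ebas (i j : Fin 3) : (Fin 3 × Fin 3) → ℂ := fun p => if p = (i, j) then 1 else 0

/-- An explicit rank-one-sum form of `P_α`. -/
noncomputable def Smat (a b : ℝ) : Matrix (Fin 3 × Fin 3) (Fin 3 × Fin 3) ℂ :=
  Matrix.vecMulVec (wvec a b 0 0 1 1) (star (wvec a b 0 0 1 1))
  + Matrix.vecMulVec (wvec a b 2 1 0 2) (star (wvec a b 2 1 0 2))
  + Matrix.vecMulVec (wvec a b 1 2 2 0) (star (wvec a b 1 2 2 0))

lemma Umat_mulVec_w (a b : ℝ) : Umat *ᵥ wvec a b 0 0 1 1 = wvec a b 2 1 0 2 := by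
  funext p
  fin_cases p <;>
    simp [Matrix.mulVec, dotProduct, Fintype.sum_prod_type, Fin.sum_univ_three,
      Umat, shiftX, Matrix.conjTranspose_apply, wvec, Prod.ext_iff]

lemma Umat_mulVec_w2 (a b : ℝ) : Umat *ᵥ wvec a b 2 1 0 2 = wvec a b 1 2 2 0 := by
  funext p
  fin_cases p <;>
    simp [Matrix.mulVec, dotProduct, Fintype.sum_prod_type, Fin.sum_univ_three,
      Umat, shiftX, Matrix.conjTranspose_apply, wvec, Prod.ext_iff]

lemma Palpha_eq (α : ℝ) : Palpha α = Smat (Real.sqrt α) (Real.sqrt (1 - α)) := by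
  have hterm : ∀ m : ℕ,
      Umat ^ m * Matrix.vecMulVec (psi0 α) (star (psi0 α)) * (Umat ^ m)ᴴ
        = Matrix.vecMulVec (Umat ^ m *ᵥ psi0 α) (star (Umat ^ m *ᵥ psi0 α)) := by
    intro m
    rw [mul_vecMulVec', vecMulVec_mul', ← Matrix.star_mulVec]
  have hpsi : psi0 α = wvec (Real.sqrt α) (Real.sqrt (1 - α)) 0 0 1 1 := rfl
  rw [Palpha, Smat]
  rw [Finset.sum_range_succ, Finset.sum_range_succ, Finset.sum_range_one]
  rw [hterm 0, hterm 1, hterm 2, hpsi]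
  rw [pow_zero, pow_one, Matrix.one_mulVec]
  have hU2 : Umat ^ 2 *ᵥ wvec (Real.sqrt α) (Real.sqrt (1 - α)) 0 0 1 1
      = wvec (Real.sqrt α) (Real.sqrt (1 - α)) 1 2 2 0 := by
    rw [pow_two, ← Matrix.mulVec_mulVec, Umat_mulVec_w, Umat_mulVec_w2]
  rw [Umat_mulVec_w, hU2]

set_option maxHeartbeats 2000000 in
lemma ptS_herm (a b : ℝ) : (pt (Smat a b)).IsHermitian := by
  ext p q
  fin_cases p <;> fin_cases q <;>
    simp [pt, Smat, Matrix.conjTranspose_apply, Matrix.vecMulVec_apply, wvec,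
      Prod.ext_iff, mul_comm]

set_option maxHeartbeats 2000000 in
lemma ptS_e11 (a b : ℝ) : pt (Smat a b) *ᵥ e11 = ((b * b : ℝ) : ℂ) • e11 := by
  funext p
  fin_cases p <;>
    simp [pt, Smat, Matrix.mulVec, dotProduct, Fintype.sum_prod_type,
      Fin.sum_univ_three, Matrix.vecMulVec_apply, wvec, e11, Prod.ext_iff]

set_option maxHeartbeats 4000000 in
lemma decomp_sub (a b : ℝ) :
    ((b * b : ℝ) : ℂ) • (1 : Matrix (Fin 3 × Fin 3) (Fin 3 × Fin 3) ℂ) - pt (Smat a b)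
      = ((b * b - a * a : ℝ) : ℂ) • (Matrix.vecMulVec (ebas 0 0) (star (ebas 0 0))
          + Matrix.vecMulVec (ebas 2 1) (star (ebas 2 1))
          + Matrix.vecMulVec (ebas 1 2) (star (ebas 1 2)))
      + ((b * b - 2 * (a * b) : ℝ) : ℂ) • (Matrix.vecMulVec (ebas 0 1) (star (ebas 0 1))
          + Matrix.vecMulVec (ebas 1 0) (star (ebas 1 0))
          + Matrix.vecMulVec (ebas 2 2) (star (ebas 2 2)))
      + ((a * b : ℝ) : ℂ) • (Matrix.vecMulVec (ebas 0 1 - ebas 1 0) (star (ebas 0 1 - ebas 1 0))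
          + Matrix.vecMulVec (ebas 1 0 - ebas 2 2) (star (ebas 1 0 - ebas 2 2))
          + Matrix.vecMulVec (ebas 0 1 - ebas 2 2) (star (ebas 0 1 - ebas 2 2))) := by
  ext p q
  fin_cases p <;> fin_cases q <;>
    (simp [pt, Smat, Matrix.one_apply, Matrix.vecMulVec_apply, wvec, ebas, Prod.ext_iff] <;>
      push_cast <;> ring)

set_option maxHeartbeats 4000000 in
lemma decomp_add (a b : ℝ) :
    ((b * b : ℝ) : ℂ) • (1 : Matrix (Fin 3 × Fin 3) (Fin 3 × Fin 3) ℂ) + pt (Smat a b)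
      = ((b * b + a * a : ℝ) : ℂ) • (Matrix.vecMulVec (ebas 0 0) (star (ebas 0 0))
          + Matrix.vecMulVec (ebas 2 1) (star (ebas 2 1))
          + Matrix.vecMulVec (ebas 1 2) (star (ebas 1 2)))
      + ((2 * (b * b) : ℝ) : ℂ) • (Matrix.vecMulVec (ebas 1 1) (star (ebas 1 1))
          + Matrix.vecMulVec (ebas 0 2) (star (ebas 0 2))
          + Matrix.vecMulVec (ebas 2 0) (star (ebas 2 0)))
      + ((b * b - a * b : ℝ) : ℂ) • (Matrix.vecMulVec (ebas 0 1) (star (ebas 0 1))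
          + Matrix.vecMulVec (ebas 1 0) (star (ebas 1 0))
          + Matrix.vecMulVec (ebas 2 2) (star (ebas 2 2)))
      + ((a * b : ℝ) : ℂ) • Matrix.vecMulVec (ebas 0 1 + ebas 1 0 + ebas 2 2)
          (star (ebas 0 1 + ebas 1 0 + ebas 2 2)) := by
  ext p q
  fin_cases p <;> fin_cases q <;>
    (simp [pt, Smat, Matrix.one_apply, Matrix.vecMulVec_apply, wvec, ebas, Prod.ext_iff] <;>
      push_cast <;> ring)

/-- for `0 < α ≤ 1/5`, the partial transpose of `P_α` has
operator norm `1 - α`, attained at the product eigenvector `|11⟩`. -/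
theorem statement19 (α : ℝ) (h0 : 0 < α) (h5 : α ≤ 1 / 5) :
    opNorm (pt (Palpha α)) = 1 - α ∧
    (pt (Palpha α)) *ᵥ e11 = ((1 - α : ℝ) : ℂ) • e11 := by
  set a := Real.sqrt α with ha
  set b := Real.sqrt (1 - α) with hb
  have h1a : (0:ℝ) ≤ 1 - α := by linarith
  have ha0 : 0 ≤ a := Real.sqrt_nonneg _
  have hb0 : 0 ≤ b := Real.sqrt_nonneg _
  have ha2 : a * a = α := Real.mul_self_sqrt h0.le
  have hb2 : b * b = 1 - α := Real.mul_self_sqrt h1a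
  have hba : 2 * a ≤ b := by nlinarith [sq_nonneg (b - 2 * a), sq_nonneg (b + 2 * a)]
  have hs1 : 0 ≤ b * b - a * a := by nlinarith
  have hs2 : 0 ≤ b * b - 2 * (a * b) := by nlinarith
  have hs3 : 0 ≤ a * b := mul_nonneg ha0 hb0
  have hs4 : 0 ≤ b * b - a * b := by nlinarith
  have hP : pt (Palpha α) = pt (Smat a b) := by rw [Palpha_eq]
  have hH : (pt (Palpha α)).IsHermitian := by rw [hP]; exact ptS_herm a b
  have hcast : ((1 - α : ℝ) : ℂ) = ((b * b : ℝ) : ℂ) := by rw [hb2]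
  have h11 : pt (Palpha α) *ᵥ e11 = ((1 - α : ℝ) : ℂ) • e11 := by
    rw [hP, ptS_e11, hb2]
  refine ⟨?_, h11⟩
  -- positive semidefiniteness of (1-α)·1 ∓ pt P
  have hPSD1 : (((1 - α : ℝ) : ℂ) • 1 - pt (Palpha α)).PosSemidef := by
    rw [hP, hcast, decomp_sub]
    exact ((posSemidef_smul_three _ hs1 _ _ _).add
      (posSemidef_smul_three _ hs2 _ _ _)).add (posSemidef_smul_three _ hs3 _ _ _)
  have hPSD2 : (((1 - α : ℝ) : ℂ) • 1 + pt (Palpha α)).PosSemidef := by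
    rw [hP, hcast, decomp_add]
    exact (((posSemidef_smul_three _ (by nlinarith) _ _ _).add
      (posSemidef_smul_three _ (by nlinarith) _ _ _)).add
      (posSemidef_smul_three _ hs4 _ _ _)).add (posSemidef_smul_vecMulVec _ hs3 _)
  -- all eigenvalues are bounded by 1 - α in absolute value
  have hbound : ∀ i, |hH.eigenvalues i| ≤ 1 - α := by
    intro i
    have hv := hH.eigenvalues_eq i
    set v := ⇑(hH.eigenvectorBasis i) with hvdef
    have hvv : dotProduct (star v) v = 1 := eigenvector_dot_self hH i
    have key : ∀ M : Matrix (Fin 3 × Fin 3) (Fin 3 × Fin 3) ℂ,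
        dotProduct (star v) ((((1 - α : ℝ) : ℂ) • 1 - M) *ᵥ v)
          = ((1 - α : ℝ) : ℂ) - dotProduct (star v) (M *ᵥ v) := by
      intro M
      rw [Matrix.sub_mulVec, dotProduct_sub, Matrix.smul_mulVec,
        Matrix.one_mulVec, dotProduct_smul, hvv, smul_eq_mul, mul_one]
    have key2 : ∀ M : Matrix (Fin 3 × Fin 3) (Fin 3 × Fin 3) ℂ,
        dotProduct (star v) ((((1 - α : ℝ) : ℂ) • 1 + M) *ᵥ v)
          = ((1 - α : ℝ) : ℂ) + dotProduct (star v) (M *ᵥ v) := by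
      intro M
      rw [Matrix.add_mulVec, dotProduct_add, Matrix.smul_mulVec,
        Matrix.one_mulVec, dotProduct_smul, hvv, smul_eq_mul, mul_one]
    have h1 := hPSD1.re_dotProduct_nonneg v
    have h2 := hPSD2.re_dotProduct_nonneg v
    rw [key] at h1
    rw [key2] at h2
    rw [map_sub] at h1
    rw [map_add] at h2
    simp only [RCLike.ofReal_re, RCLike.re_to_complex, Complex.ofReal_re] at h1 h2
    simp only [RCLike.re_to_complex] at hv
    rw [abs_le, hv]
    constructor <;> linarith
  -- the value 1 - α is attained
  have hne : e11 ≠ 0 := by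
    intro h
    have := congrFun h (1, 1)
    simp [e11] at this
  obtain ⟨i0, hi0⟩ := exists_eigenvalue_eq' hH hne h11
  -- conclude
  rw [opNorm, dif_pos hH]
  apply le_antisymm
  · exact ciSup_le hbound
  · have : (1 - α : ℝ) = |hH.eigenvalues i0| := by rw [hi0, abs_of_nonneg h1a]
    rw [this]
    exact le_ciSup (f := fun j => |hH.eigenvalues j|) (Set.Finite.bddAbove (Set.finite_range _)) i0
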